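/- There exists an absolute constant c > 0 such that for all q, t ∈ ℂ with 0 < |q| ≤ e^{−π√3}, |q|^{1/2} ≤ |t| ≤ 1, and t ≠ 1, one has | log|g₀(t)| − log|t − 1| | ≤ c, where g₀(t) = (t − 1)·∏_{n=1}^∞ (1 − qⁿ t)(1 − qⁿ t^{−1}). -/

import Mathlib

open Real

set_option maxHeartbeats 1000000 in
/-- There is an absolute constant `c > 0` such that for all `q, t ∈ ℂ` with
`0 < |q| ≤ e^{−π√3}`, `|q|^{1/2} ≤ |t| ≤ 1` and `t ≠ 1`, the function
`g₀(t) = (t − 1)·∏_{n≥1} (1 − qⁿt)(1 − qⁿt⁻¹)` satisfies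
`| log|g₀(t)| − log|t − 1| | ≤ c`. -/
theorem log_g0_near_log_dist :
    ∃ c : ℝ, 0 < c ∧
      ∀ q t : ℂ, 0 < ‖q‖ →
        ‖q‖ ≤ Real.exp (-(π * Real.sqrt 3)) →
        ‖q‖ ^ ((1 : ℝ) / 2) ≤ ‖t‖ → ‖t‖ ≤ 1 → t ≠ 1 →
          |Real.log (‖
              ((t - 1) * ∏' n : ℕ, (1 - q ^ (n + 1) * t) * (1 - q ^ (n + 1) * t⁻¹))‖) -
            Real.log (‖t - 1‖)| ≤ c := by
  refine ⟨1, one_pos, fun q t hq0 hq1 hts ht1 htne1 => ?_⟩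
  set s : ℝ := ‖q‖ ^ ((1 : ℝ) / 2) with hs_def
  have hs_pos : 0 < s := Real.rpow_pos_of_pos hq0 _
  have hs_sq : s * s = ‖q‖ := by
    rw [hs_def, ← Real.rpow_add hq0]
    norm_num
  -- numeric bound : s ≤ 1/10
  have hπ : (3.1415 : ℝ) ≤ π := by
    have := Real.pi_gt_d6
    linarith
  have h3 : (1.732 : ℝ) ≤ Real.sqrt 3 := by
    nlinarith [Real.sq_sqrt (by norm_num : (0:ℝ) ≤ 3), Real.sqrt_nonneg 3]
  have hx : (2.7 : ℝ) ≤ π * Real.sqrt 3 / 2 := by nlinarith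
  have h10 : (10 : ℝ) ≤ Real.exp (π * Real.sqrt 3 / 2) := by
    have he : Real.exp 2.7 = Real.exp 1 * Real.exp 1 * Real.exp 0.7 := by
      rw [← Real.exp_add, ← Real.exp_add]; norm_num
    have h07 : (1.7 : ℝ) ≤ Real.exp 0.7 := by
      have := Real.add_one_le_exp (0.7 : ℝ); linarith
    have h1 : (2.7182818283 : ℝ) ≤ Real.exp 1 := le_of_lt Real.exp_one_gt_d9
    have h27 : (10 : ℝ) ≤ Real.exp 2.7 := by rw [he]; nlinarith
    exact h27.trans (Real.exp_le_exp.mpr hx)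
  have hs_le : s ≤ 1 / 10 := by
    have h1 : s ≤ (Real.exp (-(π * Real.sqrt 3))) ^ ((1 : ℝ) / 2) :=
      Real.rpow_le_rpow hq0.le hq1 (by norm_num)
    have h2 : (Real.exp (-(π * Real.sqrt 3))) ^ ((1 : ℝ) / 2)
        = Real.exp (-(π * Real.sqrt 3 / 2)) := by
      rw [Real.rpow_def_of_pos (Real.exp_pos _), Real.log_exp]
      ring_nf
    have h3' : Real.exp (-(π * Real.sqrt 3 / 2)) ≤ 1 / 10 := by
      rw [Real.exp_neg]
      rw [inv_le_comm₀ (Real.exp_pos _) (by norm_num)]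
      simpa using h10
    calc s ≤ _ := h1
      _ = _ := h2
      _ ≤ 1 / 10 := h3'
  have hq_le : ‖q‖ ≤ 1 / 100 := by nlinarith
  have ht0 : (0 : ℝ) < ‖t‖ := lt_of_lt_of_le hs_pos hts
  have htne0 : t ≠ 0 := by
    intro h; rw [h] at ht0; simp at ht0
  -- the factors
  set f : ℕ → ℂ := fun n => (1 - q ^ (n + 1) * t) * (1 - q ^ (n + 1) * t⁻¹) with hf_def
  -- bound on |f n - 1|
  have hqn : ∀ n : ℕ, ‖q‖ ^ n ≤ 1 := fun n =>
    pow_le_one₀ hq0.le (le_trans hq_le (by norm_num))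
  have hw : ∀ n : ℕ, ‖f n - 1‖ ≤ 3 * s * ‖q‖ ^ n := by
    intro n
    have hqs : ‖q‖ ≤ s := by nlinarith
    have hkey : ‖q‖ ^ n * ‖q‖ ≤ s * ‖q‖ ^ n := by
      have := mul_le_mul_of_nonneg_left hqs (pow_nonneg hq0.le n)
      linarith
    have ha : ‖q ^ (n + 1) * t‖ ≤ s * ‖q‖ ^ n := by
      rw [norm_mul, norm_pow]
      have h1 : ‖q‖ ^ (n + 1) * ‖t‖ ≤ ‖q‖ ^ (n + 1) * 1 :=
        mul_le_mul_of_nonneg_left ht1 (by positivity)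
      rw [pow_succ] at h1 ⊢
      linarith
    have hb : ‖q ^ (n + 1) * t⁻¹‖ ≤ s * ‖q‖ ^ n := by
      rw [norm_mul, norm_pow, norm_inv]
      have hinv : (‖t‖)⁻¹ ≤ s⁻¹ := by
        exact inv_anti₀ hs_pos hts
      have h1 : ‖q‖ ^ (n + 1) * (‖t‖)⁻¹
          ≤ ‖q‖ ^ (n + 1) * s⁻¹ :=
        mul_le_mul_of_nonneg_left hinv (by positivity)
      have h2 : ‖q‖ ^ (n + 1) * s⁻¹ = s * ‖q‖ ^ n := by
        rw [pow_succ, ← hs_sq]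
        field_simp
      linarith
    have hexp : f n - 1 = (q ^ (n + 1) * t) * (q ^ (n + 1) * t⁻¹)
        - q ^ (n + 1) * t - q ^ (n + 1) * t⁻¹ := by
      simp only [hf_def]; ring
    have htri : ‖f n - 1‖
        ≤ ‖q ^ (n + 1) * t‖ * ‖q ^ (n + 1) * t⁻¹‖
          + ‖q ^ (n + 1) * t‖ + ‖q ^ (n + 1) * t⁻¹‖ := by
      rw [hexp]
      refine le_trans (norm_sub_le _ _) ?_
      have h1 := norm_sub_le ((q ^ (n + 1) * t) * (q ^ (n + 1) * t⁻¹))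
        (q ^ (n + 1) * t)
      rw [norm_mul] at h1
      linarith
    have hs1 : s * ‖q‖ ^ n ≤ 1 := by
      nlinarith [hqn n, pow_nonneg hq0.le n]
    have habs : ‖q ^ (n + 1) * t‖ * ‖q ^ (n + 1) * t⁻¹‖
        ≤ s * ‖q‖ ^ n := by
      have h0a : (0:ℝ) ≤ ‖q ^ (n + 1) * t‖ := norm_nonneg _
      have h0b : (0:ℝ) ≤ ‖q ^ (n + 1) * t⁻¹‖ := norm_nonneg _
      have hsq : (0:ℝ) ≤ s * ‖q‖ ^ n := by positivity
      have h2 : ‖q ^ (n + 1) * t‖ * ‖q ^ (n + 1) * t⁻¹‖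
          ≤ (s * ‖q‖ ^ n) * (s * ‖q‖ ^ n) :=
        mul_le_mul ha hb h0b hsq
      nlinarith
    linarith
  have hw_half : ∀ n : ℕ, ‖f n - 1‖ ≤ 1 / 2 := by
    intro n
    have h1 := hw n
    have h2 : (0:ℝ) ≤ 1 / 10 - s := by linarith
    nlinarith [mul_nonneg h2 (pow_nonneg hq0.le n), hqn n]
  -- the factors are nonzero
  have hfne : ∀ n : ℕ, f n ≠ 0 := by
    intro n h
    have := hw_half n
    rw [h] at this
    simp at this
    linarith
  -- bound on the logs
  have hlog : ∀ n : ℕ, ‖Complex.log (f n)‖ ≤ 9 / 2 * s * ‖q‖ ^ n := by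
    intro n
    have h1 : f n = 1 + (f n - 1) := by ring
    have h2 : ‖f n - 1‖ ≤ 1 / 2 := hw_half n
    calc ‖Complex.log (f n)‖ = ‖Complex.log (1 + (f n - 1))‖ := by rw [← h1]
      _ ≤ 3 / 2 * ‖f n - 1‖ := Complex.norm_log_one_add_half_le_self h2
      _ ≤ 3 / 2 * (3 * s * ‖q‖ ^ n) := by
          have := hw n
          have : ‖f n - 1‖ ≤ 3 * s * ‖q‖ ^ n := this
          linarith
      _ = 9 / 2 * s * ‖q‖ ^ n := by ring
  -- summability
  have hgeom : Summable (fun n : ℕ => 9 / 2 * s * ‖q‖ ^ n) :=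
    (summable_geometric_of_lt_one hq0.le
      (lt_of_le_of_lt hq_le (by norm_num))).mul_left _
  have hsum_norm : Summable (fun n : ℕ => ‖Complex.log (f n)‖) :=
    Summable.of_nonneg_of_le (fun n => norm_nonneg _) hlog hgeom
  have hsum : Summable (fun n : ℕ => Complex.log (f n)) := hsum_norm.of_norm
  -- the product equals exp of the sum of logs
  have hPe : Complex.exp (∑' n : ℕ, Complex.log (f n)) = ∏' n : ℕ, f n := by
    exact Complex.cexp_tsum_eq_tprod hfne hsum
  -- bound on the sum
  set S : ℂ := ∑' n : ℕ, Complex.log (f n) with hS_def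
  have hS_le : ‖S‖ ≤ 1 := by
    have h1 : ‖S‖ ≤ ∑' n : ℕ, ‖Complex.log (f n)‖ := norm_tsum_le_tsum_norm hsum_norm
    have h2 : ∑' n : ℕ, ‖Complex.log (f n)‖ ≤ ∑' n : ℕ, 9 / 2 * s * ‖q‖ ^ n :=
      Summable.tsum_le_tsum hlog hsum_norm hgeom
    have h3 : ∑' n : ℕ, 9 / 2 * s * ‖q‖ ^ n
        = 9 / 2 * s * (1 - ‖q‖)⁻¹ := by
      rw [tsum_mul_left, tsum_geometric_of_lt_one hq0.le
        (lt_of_le_of_lt hq_le (by norm_num))]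
    have h4 : (1 - ‖q‖)⁻¹ ≤ (1 - 1 / 100 : ℝ)⁻¹ := by
      apply inv_anti₀ (by norm_num)
      linarith
    have h5 : 9 / 2 * s * (1 - ‖q‖)⁻¹ ≤ 1 := by
      have hnn : (0:ℝ) ≤ (1 - ‖q‖)⁻¹ := inv_nonneg.mpr (by linarith)
      nlinarith [mul_nonneg (by linarith : (0:ℝ) ≤ 1 / 10 - s) hnn, h4]
    linarith
  -- conclude
  have hPabs : ‖∏' n : ℕ, f n‖ = Real.exp S.re := by
    rw [← hPe, Complex.norm_exp]
  have hts1 : ‖t - 1‖ ≠ 0 := by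
    simp only [ne_eq, norm_eq_zero]
    exact sub_ne_zero.mpr htne1
  have hgoal : Real.log (‖(t - 1) * ∏' n : ℕ, f n‖)
      - Real.log (‖t - 1‖) = S.re := by
    rw [norm_mul, Real.log_mul hts1 (by rw [hPabs]; exact (Real.exp_pos _).ne'),
      hPabs, Real.log_exp]
    ring
  have : |Real.log (‖(t - 1) * ∏' n : ℕ, f n‖)
      - Real.log (‖t - 1‖)| ≤ 1 := by
    rw [hgoal]
    calc |S.re| ≤ ‖S‖ := Complex.abs_re_le_norm S
      _ ≤ 1 := hS_le
  exact this
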